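/- For every real c with 0 < c < 1, the function g(s) = arsinh(c · sinh s) is strictly convex on [0, ∞). -/

import Mathlib

open Real

private lemma stmt15_hasDerivAt (c : ℝ) (s : ℝ) :
    HasDerivAt (fun s => Real.arsinh (c * Real.sinh s))
      ((Real.sqrt (1 + (c * Real.sinh s) ^ 2))⁻¹ * (c * Real.cosh s)) s :=
  by have := (Real.hasDerivAt_arsinh (c * Real.sinh s)).comp s ((Real.hasDerivAt_sinh s).const_mul c); exact this

/-- For `0 < c < 1`, the function `s ↦ arsinh (c · sinh s)` is strictly convex
on `[0, ∞)`. -/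
theorem stmt15 (c : ℝ) (hc0 : 0 < c) (hc1 : c < 1) :
    StrictConvexOn ℝ (Set.Ici (0 : ℝ)) (fun s => Real.arsinh (c * Real.sinh s)) := by
  set d : ℝ → ℝ := fun s => (Real.sqrt (1 + (c * Real.sinh s) ^ 2))⁻¹ * (c * Real.cosh s) with hd
  have hderiv : deriv (fun s => Real.arsinh (c * Real.sinh s)) = d := by
    funext s
    exact (stmt15_hasDerivAt c s).deriv
  have hsqrt_pos : ∀ s : ℝ, 0 < Real.sqrt (1 + (c * Real.sinh s) ^ 2) := by
    intro s
    apply Real.sqrt_pos.2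
    positivity
  have hdpos : ∀ s : ℝ, 0 < d s := by
    intro s
    have := Real.cosh_pos (x := s)
    positivity
  apply StrictMonoOn.strictConvexOn_of_deriv (convex_Ici 0)
  · exact ((Real.continuous_arsinh.comp (continuous_const.mul Real.continuous_sinh)).continuousOn)
  · rw [hderiv, interior_Ici]
    intro a ha b hb hab
    simp only [Set.mem_Ioi] at ha hb
    -- compare squares
    have hsa : 0 < Real.sinh a := by simpa using Real.sinh_lt_sinh.2 ha
    have hsb : Real.sinh a < Real.sinh b := Real.sinh_lt_sinh.2 hab
    have hsq : d a ^ 2 < d b ^ 2 := by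
      have ea : d a ^ 2 = (c * Real.cosh a) ^ 2 / (1 + (c * Real.sinh a) ^ 2) := by
        rw [hd]
        rw [mul_pow, inv_pow, Real.sq_sqrt (by positivity)]
        ring
      have eb : d b ^ 2 = (c * Real.cosh b) ^ 2 / (1 + (c * Real.sinh b) ^ 2) := by
        rw [hd]
        rw [mul_pow, inv_pow, Real.sq_sqrt (by positivity)]
        ring
      rw [ea, eb, div_lt_div_iff₀ (by positivity) (by positivity)]
      have ca : Real.cosh a ^ 2 = 1 + Real.sinh a ^ 2 := by
        have := Real.cosh_sq a; linarith
      have cb : Real.cosh b ^ 2 = 1 + Real.sinh b ^ 2 := by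
        have := Real.cosh_sq b; linarith
      have h2 : Real.sinh a ^ 2 < Real.sinh b ^ 2 := by nlinarith
      have h3 : 0 < 1 - c ^ 2 := by nlinarith
      have key : 0 < c ^ 2 * ((1 - c ^ 2) * (Real.sinh b ^ 2 - Real.sinh a ^ 2)) :=
        mul_pos (pow_pos hc0 2) (mul_pos h3 (by linarith))
      simp only [mul_pow, ca, cb]
      nlinarith [key]
    exact lt_of_pow_lt_pow_left₀ 2 (hdpos b).le hsq
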